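/- If a cut Γ of an ordered abelian group has the form Γ = γ + Γ̂ for some group element γ, where Γ̂ := Γ − Γ, then for all naturals k < m one has mΓ − kΓ = (m−k)Γ. -/

import Mathlib

set_option autoImplicit false

universe u v

/-- A Dedekind cut of a linearly ordered abelian group, represented by its left part
(`L = Λ^L`); the right part is the complement of `L`.  The cuts `-∞` (`L = ∅`) and
`+∞` (`L = G`) are included. -/
structure Cut (G : Type u) [AddCommGroup G] [LinearOrder G] [IsOrderedAddMonoid G] : Type u where
  L : Set G
  lower : ∀ ⦃x y : G⦄, y ∈ L → x ≤ y → x ∈ L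

namespace Cut

variable {G : Type u} [AddCommGroup G] [LinearOrder G] [IsOrderedAddMonoid G]

/-- Cuts are ordered by inclusion of left parts. -/
instance : PartialOrder (Cut G) where
  le Λ Γ := Λ.L ⊆ Γ.L
  le_refl _ := subset_rfl
  le_trans _ _ _ h h' := fun x hx => h' (h hx)
  le_antisymm := by
    rintro ⟨L₁, h₁⟩ ⟨L₂, h₂⟩ h h'
    simpa using Set.Subset.antisymm h h'

/-- `γ⁻`, the cut with left part `(-∞, γ)`. -/
def lcut (γ : G) : Cut G := ⟨{x | x < γ}, fun _ _ hy hxy => lt_of_le_of_lt hxy hy⟩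

/-- `γ⁺`, the cut with left part `(-∞, γ]`. -/
def rcut (γ : G) : Cut G := ⟨{x | x ≤ γ}, fun _ _ hy hxy => le_trans hxy hy⟩

/-- The left sum of cuts: the smallest cut whose left part contains all `λ + γ`
with `λ < Λ`, `γ < Γ`. -/
instance : Add (Cut G) :=
  ⟨fun Λ Γ => ⟨{x | ∃ l ∈ Λ.L, ∃ g ∈ Γ.L, x ≤ l + g}, by
    rintro x y ⟨l, hl, g, hg, hy⟩ hxy
    exact ⟨l, hl, g, hg, hxy.trans hy⟩⟩⟩

/-- The right sum of cuts: the largest cut whose right part contains all `λ + γ`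
with `λ > Λ`, `γ > Γ`. -/
def addR (Λ Γ : Cut G) : Cut G :=
  ⟨{x | ∀ l ∉ Λ.L, ∀ g ∉ Γ.L, x < l + g}, by
    intro x y hy hxy l hl g hg
    exact lt_of_le_of_lt hxy (hy l hl g hg)⟩

/-- The right difference of cuts: the largest cut whose right part contains all
`λ − γ` with `λ > Λ`, `γ < Γ`. -/
def sub (Λ Γ : Cut G) : Cut G :=
  ⟨{x | ∀ l ∉ Λ.L, ∀ g ∈ Γ.L, x < l - g}, by
    intro x y hy hxy l hl g hg
    exact lt_of_le_of_lt hxy (hy l hl g hg)⟩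

/-- Translation `γ + Λ` of a cut by a group element, with left part `{γ + λ : λ ∈ Λ^L}`. -/
def transl (γ : G) (Λ : Cut G) : Cut G :=
  ⟨(fun x => γ + x) '' Λ.L, by
    rintro x y ⟨l, hl, rfl⟩ hxy
    exact ⟨x - γ, Λ.lower hl (sub_le_iff_le_add'.mpr hxy), by show γ + (x - γ) = x; rw [add_comm, sub_add_cancel]⟩⟩

/-- Negation of a cut: `-Λ = (-Λ^R, -Λ^L)`. -/
def neg (Λ : Cut G) : Cut G :=
  ⟨{x | -x ∉ Λ.L}, by
    intro x y hy hxy hx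
    exact hy (Λ.lower hx (neg_le_neg hxy))⟩

/-- The `n`-fold left sum `Λ + Γ + ⋯ + Γ` (`Γ` added `n` times). -/
def addn (Λ Γ : Cut G) : ℕ → Cut G
  | 0 => Λ
  | n + 1 => addn Λ Γ n + Γ

/-- The `n`-fold right difference `Λ − Γ − ⋯ − Γ` (`Γ` subtracted `n` times). -/
def subn (Λ Γ : Cut G) : ℕ → Cut G
  | 0 => Λ
  | n + 1 => (subn Λ Γ n).sub Γ

/-- `nΓ = Γ + ⋯ + Γ` (`n` times); by convention `0 • Γ = 0⁺`, the neutral element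
of the left sum. -/
def nsmul : ℕ → Cut G → Cut G
  | 0, _ => rcut 0
  | 1, Γ => Γ
  | n + 2, Γ => nsmul (n + 1) Γ + Γ

/-- `ℤ`-multiples of a cut: `(-n)Γ := -(nΓ)`. -/
def zsmul (n : ℤ) (Γ : Cut G) : Cut G :=
  if 0 ≤ n then nsmul n.toNat Γ else (nsmul (-n).toNat Γ).neg

/-- `ℤΓ := sup {nΓ : n ∈ ℤ}`. -/
def zmul (Γ : Cut G) : Cut G :=
  ⟨⋃ n : ℤ, (zsmul n Γ).L, by
    intro x y hy hxy
    rcases Set.mem_iUnion.1 hy with ⟨n, hn⟩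
    exact Set.mem_iUnion.2 ⟨n, (zsmul n Γ).lower hn hxy⟩⟩

/-- `S⁺`: the smallest cut whose left part contains the set `S`. -/
def ofSet (s : Set G) : Cut G :=
  ⟨{x | ∃ γ ∈ s, x ≤ γ}, by
    rintro x y ⟨γ, hγ, hy⟩ hxy
    exact ⟨γ, hγ, hxy.trans hy⟩⟩

/-- The supremum (maximum) of two cuts. -/
def max (Λ Γ : Cut G) : Cut G :=
  ⟨Λ.L ∪ Γ.L, by
    rintro x y (hy | hy) hxy
    · exact Or.inl (Λ.lower hy hxy)
    · exact Or.inr (Γ.lower hy hxy)⟩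

/-- The infimum of a set of cuts. -/
def inf (s : Set (Cut G)) : Cut G :=
  ⟨{x | ∀ Λ ∈ s, x ∈ Λ.L}, by
    intro x y hy hxy Λ hΛ
    exact Λ.lower (hy Λ hΛ) hxy⟩

end Cut

/-- A valued field `K` (of equal characteristic) with value group `G`, a value group
section `t`, and an embedded residue field `k ⊆ K` (the residue field section is the
inclusion). The valuation is written additively, with `v 0 = ⊤`. -/
structure VData (K : Type u) (G : Type v) [Field K] [AddCommGroup G] [LinearOrder G] [IsOrderedAddMonoid G] where
  v : K → WithTop G
  k : Subfield K
  t : G → K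
  v_eq_top : ∀ x : K, v x = ⊤ ↔ x = 0
  v_mul : ∀ x y : K, v (x * y) = v x + v y
  v_sub : ∀ x y : K, min (v x) (v y) ≤ v (x - y)
  v_surj : ∀ γ : G, ∃ x : K, v x = (γ : WithTop G)
  v_t : ∀ γ : G, v (t γ) = (γ : WithTop G)
  t_neg : ∀ γ : G, t (-γ) = (t γ)⁻¹
  v_k : ∀ c ∈ k, c ≠ 0 → v c = (0 : WithTop G)
  k_res : ∀ x : K, v x = (0 : WithTop G) → ∃ c ∈ k, (0 : WithTop G) < v (x - c)

namespace VData

variable {K : Type u} {G : Type v} [Field K] [AddCommGroup G] [LinearOrder G] [IsOrderedAddMonoid G]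

/-- `O[Λ] = {x ∈ K : v(x) > Λ}`, the (possibly fractional) ideal of the valuation
ring associated with the cut `Λ`. -/
def Oc (S : VData K G) (Λ : Cut G) : Set K :=
  {x | ∀ γ : G, S.v x = (γ : WithTop G) → γ ∉ Λ.L}

/-- `O_R[Λ] = {x ∈ R : v(x) > Λ}`, for a subring `R` of `K`. -/
def OcR (S : VData K G) (R : Subring K) (Λ : Cut G) : Set K :=
  {x | x ∈ R ∧ ∀ γ : G, S.v x = (γ : WithTop G) → γ ∉ Λ.L}

end VData

/-- Axioms CA–CD of a (weak) tower of complements for the valued field `K`: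
each `A[Λ]` is a `k`-subspace of `K` (CA), `A[Λ] ⊕ O[Λ] = K` (CB),
`t(γ)·k ⊆ A[γ⁺]` (CC), and `Γ ≤ Λ ↔ A[Γ] ⊆ A[Λ]` (CD). -/
structure TowerBase {K : Type u} {G : Type v} [Field K] [AddCommGroup G] [LinearOrder G] [IsOrderedAddMonoid G]
    (S : VData K G) where
  A : Cut G → Set K
  zero_mem : ∀ Λ : Cut G, (0 : K) ∈ A Λ
  add_mem : ∀ Λ : Cut G, ∀ x ∈ A Λ, ∀ y ∈ A Λ, x + y ∈ A Λ
  smul_mem : ∀ Λ : Cut G, ∀ c ∈ S.k, ∀ x ∈ A Λ, c * x ∈ A Λ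
  disj : ∀ Λ : Cut G, ∀ x ∈ A Λ, x ∈ S.Oc Λ → x = 0
  spans : ∀ Λ : Cut G, ∀ x : K, ∃ a ∈ A Λ, ∃ o ∈ S.Oc Λ, x = a + o
  sec_mem : ∀ γ : G, ∀ c ∈ S.k, c * S.t γ ∈ A (Cut.rcut γ)
  mono : ∀ Γ Λ : Cut G, Γ ≤ Λ ↔ A Γ ⊆ A Λ

/-- A weak tower of complements: CA–CD together with CF (`A[γ+Λ] = t(γ)·A[Λ]`). -/
structure WeakTower {K : Type u} {G : Type v} [Field K] [AddCommGroup G] [LinearOrder G] [IsOrderedAddMonoid G]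
    (S : VData K G) extends TowerBase S where
  transl_eq : ∀ (γ : G) (Λ : Cut G),
    A (Cut.transl γ Λ) = (fun x => S.t γ * x) '' A Λ

/-- A tower of complements: CA–CD together with the multiplicativity axiom CE
(`A[Λ]·A[Γ] ⊆ A[Λ+Γ]`). -/
structure Tower {K : Type u} {G : Type v} [Field K] [AddCommGroup G] [LinearOrder G] [IsOrderedAddMonoid G]
    (S : VData K G) extends TowerBase S where
  mul_mem : ∀ Λ Γ : Cut G, ∀ x ∈ A Λ, ∀ y ∈ A Γ, x * y ∈ A (Λ + Γ)

/-- Axioms CA–CD of a (weak) tower of complements for a subring `R` of `K`. -/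
structure RTowerBase {K : Type u} {G : Type v} [Field K] [AddCommGroup G] [LinearOrder G] [IsOrderedAddMonoid G]
    (S : VData K G) (R : Subring K) where
  A : Cut G → Set K
  subset_R : ∀ Λ : Cut G, A Λ ⊆ (R : Set K)
  zero_mem : ∀ Λ : Cut G, (0 : K) ∈ A Λ
  add_mem : ∀ Λ : Cut G, ∀ x ∈ A Λ, ∀ y ∈ A Λ, x + y ∈ A Λ
  smul_mem : ∀ Λ : Cut G, ∀ c ∈ S.k, ∀ x ∈ A Λ, c * x ∈ A Λ
  disj : ∀ Λ : Cut G, ∀ x ∈ A Λ, x ∈ S.OcR R Λ → x = 0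
  spans : ∀ Λ : Cut G, ∀ x ∈ R, ∃ a ∈ A Λ, ∃ o ∈ S.OcR R Λ, x = a + o
  sec_mem : ∀ γ : G, ∀ c ∈ S.k, c * S.t γ ∈ A (Cut.rcut γ)
  mono : ∀ Γ Λ : Cut G, Γ ≤ Λ ↔ A Γ ⊆ A Λ

/-- A weak tower of complements for a subring `R` of `K`: CA–CD together with CF. -/
structure RWeakTower {K : Type u} {G : Type v} [Field K] [AddCommGroup G] [LinearOrder G] [IsOrderedAddMonoid G]
    (S : VData K G) (R : Subring K) extends RTowerBase S R where
  transl_eq : ∀ (γ : G) (Λ : Cut G),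
    A (Cut.transl γ Λ) = (fun x => S.t γ * x) '' A Λ

namespace RTowerBase

variable {K : Type u} {G : Type v} [Field K] [AddCommGroup G] [LinearOrder G] [IsOrderedAddMonoid G]
  {S : VData K G} {R : Subring K}

/-- The support of `x ∈ R` with respect to a (weak) tower of complements:
`γ ∈ supp x` iff the coefficient `a_γ(x)` in the decomposition
`x = x₁ + a_γ(x) t(γ) + x₃` (with `x₁ ∈ A[γ⁻]`, `v(x₃) > γ`) is nonzero, i.e.
iff `x ∉ A[γ⁻] + O[γ⁺]`. -/
def supp (T : RTowerBase S R) (x : K) : Set G :=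
  {γ | ¬ ∃ a ∈ T.A (Cut.lcut γ), ∃ o ∈ S.OcR R (Cut.rcut γ), x = a + o}

/-- `μ(x) := (supp x)⁺`, the smallest cut whose left part contains the support. -/
def mu (T : RTowerBase S R) (x : K) : Cut G :=
  Cut.ofSet (T.supp x)

end RTowerBase

namespace TowerBase

variable {K : Type u} {G : Type v} [Field K] [AddCommGroup G] [LinearOrder G] [IsOrderedAddMonoid G]
  {S : VData K G}

/-- `μ(x) := inf {Λ : x ∈ A[Λ]}`. -/
def muInf (T : TowerBase S) (x : K) : Cut G :=
  Cut.inf {Λ | x ∈ T.A Λ}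

end TowerBase

namespace RTowerBase

variable {K : Type u} {G : Type v} [Field K] [AddCommGroup G] [LinearOrder G] [IsOrderedAddMonoid G]
  {S : VData K G} {R : Subring K}

/-- `μ(x) := inf {Λ : x ∈ A[Λ]}`. -/
def muInf (T : RTowerBase S R) (x : K) : Cut G :=
  Cut.inf {Λ | x ∈ T.A Λ}

end RTowerBase

namespace CutAux

variable {G : Type u} [AddCommGroup G] [LinearOrder G] [IsOrderedAddMonoid G]

lemma cut_ext {Λ Γ : Cut G} (h : Λ.L = Γ.L) : Λ = Γ := by
  cases Λ; cases Γ; simpa using h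

lemma mem_add {Λ Γ : Cut G} {x : G} :
    x ∈ (Λ + Γ).L ↔ ∃ l ∈ Λ.L, ∃ g ∈ Γ.L, x ≤ l + g := Iff.rfl

lemma mem_sub {Λ Γ : Cut G} {x : G} :
    x ∈ (Λ.sub Γ).L ↔ ∀ l ∉ Λ.L, ∀ g ∈ Γ.L, x < l - g := Iff.rfl

/-- Characterization of the left part of `Γ̂ = Γ − Γ`. -/
lemma mem_hat {Γ : Cut G} {x : G} :
    x ∈ (Γ.sub Γ).L ↔ ∀ g ∈ Γ.L, x + g ∈ Γ.L := by
  constructor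
  · intro h g hg
    by_contra hxg
    have := h (x + g) hxg g hg
    simp at this
  · intro h l hl g hg
    have h1 : x + g ∈ Γ.L := h g hg
    have h2 : x + g < l := lt_of_not_ge fun hle => hl (Γ.lower h1 hle)
    exact lt_sub_iff_add_lt.mpr h2

/-- Closure of a cut under adding elements of `Γ̂`. -/
def HatClosed (Γ Λ : Cut G) : Prop :=
  ∀ x ∈ Λ.L, ∀ d ∈ (Γ.sub Γ).L, x + d ∈ Λ.L

lemma hatClosed_self (Γ : Cut G) : HatClosed Γ Γ := by
  intro x hx d hd
  have := (mem_hat.mp hd) x hx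
  rwa [add_comm] at this

lemma hatClosed_add {Γ Λ : Cut G} (h : HatClosed Γ Λ) : HatClosed Γ (Λ + Γ) := by
  rintro x ⟨l, hl, g, hg, hle⟩ d hd
  exact ⟨l + d, h l hl d hd, g, hg, by
    have : x + d ≤ l + g + d := add_le_add_left hle d
    calc x + d ≤ l + g + d := this
      _ = l + d + g := by abel⟩

lemma hatClosed_nsmul (Γ : Cut G) : ∀ n : ℕ, 1 ≤ n → HatClosed Γ (Cut.nsmul n Γ)
  | 1, _ => hatClosed_self Γ
  | (n + 2), _ => by
    have : Cut.nsmul (n + 2) Γ = Cut.nsmul (n + 1) Γ + Γ := rfl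
    rw [this]
    exact hatClosed_add (hatClosed_nsmul Γ (n + 1) (by omega))

lemma gamma_mem {Γ : Cut G} {γ : G} (hΓ : Γ = Cut.transl γ (Γ.sub Γ)) : γ ∈ Γ.L := by
  conv_lhs => rw [hΓ]
  exact ⟨0, mem_hat.mpr fun g hg => by simpa using hg, by simp⟩

/-- Key step: if `Γ = γ + Γ̂` and `Λ` is closed under `Γ̂`, then `(Λ + Γ) − Γ = Λ`. -/
lemma add_sub_cancel_cut {Γ Λ : Cut G} {γ : G} (hΓ : Γ = Cut.transl γ (Γ.sub Γ))
    (hΛ : HatClosed Γ Λ) : (Λ + Γ).sub Γ = Λ := by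
  apply cut_ext
  apply Set.Subset.antisymm
  · intro x hx
    by_contra hxΛ
    have hγ : γ ∈ Γ.L := gamma_mem hΓ
    have hnot : x + γ ∉ (Λ + Γ).L := by
      rintro ⟨l, hl, g', hg', hle⟩
      have hg'' : g' ∈ (Cut.transl γ (Γ.sub Γ)).L := by rw [← hΓ]; exact hg'
      obtain ⟨d, hd, rfl⟩ := hg''
      have hxd : x ≤ l + d := by
        have h1 : x + γ ≤ l + (γ + d) := hle
        have h2 : x + γ ≤ (l + d) + γ := by
          calc x + γ ≤ l + (γ + d) := h1
            _ = (l + d) + γ := by abel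
        exact le_of_add_le_add_right h2
      exact hxΛ (Λ.lower (hΛ l hl d hd) hxd)
    have := (mem_sub.mp hx) (x + γ) hnot γ hγ
    simp at this
  · intro x hx
    intro s hs g hg
    by_contra hlt
    push_neg at hlt
    -- s - g ≤ x, so s ≤ x + g, so s ∈ (Λ + Γ).L
    exact hs ⟨x, hx, g, hg, sub_le_iff_le_add.mp hlt⟩

end CutAux

/-- If a cut `Γ` has the form `Γ = γ + Γ̂` for some group element `γ`,
where `Γ̂ := Γ − Γ`, then for all naturals `k < m` one has `mΓ − kΓ = (m−k)Γ`. -/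
theorem cut_nsmul_sub_nsmul {G : Type u} [AddCommGroup G] [LinearOrder G] [IsOrderedAddMonoid G]
    (Γ : Cut G) (γ : G) (hΓ : Γ = Cut.transl γ (Γ.sub Γ)) (k m : ℕ) (hkm : k < m) :
    Cut.subn (Cut.nsmul m Γ) Γ k = Cut.nsmul (m - k) Γ := by
  induction k with
  | zero => simp [Cut.subn]
  | succ k ih =>
    have hk : k < m := Nat.lt_of_succ_lt hkm
    have hstep : Cut.subn (Cut.nsmul m Γ) Γ (k + 1)
        = (Cut.nsmul (m - k) Γ).sub Γ := by
      rw [show Cut.subn (Cut.nsmul m Γ) Γ (k + 1)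
          = (Cut.subn (Cut.nsmul m Γ) Γ k).sub Γ from rfl, ih hk]
    rw [hstep]
    obtain ⟨j, hj⟩ : ∃ j, m - k = j + 2 := ⟨m - k - 2, by omega⟩
    rw [hj]
    have h2 : Cut.nsmul (j + 2) Γ = Cut.nsmul (j + 1) Γ + Γ := rfl
    rw [h2, CutAux.add_sub_cancel_cut hΓ (CutAux.hatClosed_nsmul Γ (j + 1) (by omega))]
    congr 1
    omega
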